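/- Let c₁,…,c_N be symmetric n×n matrices with ⟨θ, cᵢθ⟩ ≥ γ|θ|² for all θ ∈ ℝⁿ, let 𝔠 be a symmetric positive semidefinite n×n matrix with ‖𝔠 − cᵢ‖ ≤ a for all i (operator norm), and let δ ∈ [0,1). Then for any x¹,…,xᴺ ∈ ℝⁿ, (δN/(1−δ))⟨m(c·x), m(x)⟩ + ∑ᵢ⟨cᵢ xⁱ, xⁱ⟩ ≥ (γ − δa/(1−δ)) ∑ᵢ |xⁱ|², where m(c·x) = (1/N)∑ᵢ cᵢxⁱ and m(x) = (1/N)∑ᵢ xⁱ. -/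

import Mathlib

open Matrix BigOperators

private lemma symm_dot {n : ℕ} {M : Matrix (Fin n) (Fin n) ℝ} (hM : M.IsSymm)
    (u v : Fin n → ℝ) : M.mulVec u ⬝ᵥ v = u ⬝ᵥ M.mulVec v := by
  rw [Matrix.dotProduct_mulVec, ← Matrix.mulVec_transpose, hM.eq, dotProduct_comm]

private lemma bilin_lb {n : ℕ} {M : Matrix (Fin n) (Fin n) ℝ} (hM : M.IsSymm) {a : ℝ}
    (hb : ∀ θ : Fin n → ℝ, |θ ⬝ᵥ M.mulVec θ| ≤ a * (θ ⬝ᵥ θ)) (u v : Fin n → ℝ)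
    {t : ℝ} (ht : 0 < t) :
    -(a / 2) * (t * (u ⬝ᵥ u) + t⁻¹ * (v ⬝ᵥ v)) ≤ u ⬝ᵥ M.mulVec v := by
  have h1 := (abs_le.mp (hb (t • u + v))).1
  have h2 := (abs_le.mp (hb (t • u - v))).2
  have hsy : v ⬝ᵥ M.mulVec u = u ⬝ᵥ M.mulVec v := by
    rw [← symm_dot hM u v, dotProduct_comm]
  simp only [Matrix.mulVec_add, Matrix.mulVec_sub, Matrix.mulVec_smul,
    add_dotProduct, sub_dotProduct, dotProduct_add, dotProduct_sub,
    smul_dotProduct, dotProduct_smul, smul_eq_mul] at h1 h2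
  rw [hsy, dotProduct_comm v u] at h1 h2
  have key : -(a * (2 * t^2 * (u ⬝ᵥ u) + 2 * (v ⬝ᵥ v))) ≤ 4 * t * (u ⬝ᵥ M.mulVec v) := by
    nlinarith [h1, h2]
  have h4 : 0 < 4 * t := by linarith
  have htne : t ≠ 0 := ne_of_gt ht
  calc -(a / 2) * (t * (u ⬝ᵥ u) + t⁻¹ * (v ⬝ᵥ v))
      = (-(a * (2 * t^2 * (u ⬝ᵥ u) + 2 * (v ⬝ᵥ v)))) / (4 * t) := by
        field_simp; ring
    _ ≤ (4 * t * (u ⬝ᵥ M.mulVec v)) / (4 * t) := by gcongr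
    _ = u ⬝ᵥ M.mulVec v := by field_simp

private lemma dot_self_nonneg' {n : ℕ} (v : Fin n → ℝ) : 0 ≤ v ⬝ᵥ v :=
  Finset.sum_nonneg fun _ _ => mul_self_nonneg _

private lemma sum_dot {N n : ℕ} (f : Fin N → Fin n → ℝ) (v : Fin n → ℝ) :
    (∑ i, f i) ⬝ᵥ v = ∑ i, f i ⬝ᵥ v := by
  simp only [dotProduct, Finset.sum_apply, Finset.sum_mul]
  exact Finset.sum_comm

private lemma dot_sum {N n : ℕ} (v : Fin n → ℝ) (f : Fin N → Fin n → ℝ) :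
    v ⬝ᵥ (∑ i, f i) = ∑ i, v ⬝ᵥ f i := by
  simp only [dotProduct, Finset.sum_apply, Finset.mul_sum]
  exact Finset.sum_comm

private lemma mulVec_sum' {N n : ℕ} (M : Matrix (Fin n) (Fin n) ℝ) (f : Fin N → Fin n → ℝ) :
    M.mulVec (∑ i, f i) = ∑ i, M.mulVec (f i) := by
  ext k
  simp only [Matrix.mulVec, Finset.sum_apply, dot_sum]

private lemma sum_dot_sum_le {N n : ℕ} (x : Fin N → Fin n → ℝ) :
    (∑ i, x i) ⬝ᵥ (∑ i, x i) ≤ (N : ℝ) * ∑ i, x i ⬝ᵥ x i := by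
  have hexp : (∑ i, x i) ⬝ᵥ (∑ i, x i) = ∑ i, ∑ j, x i ⬝ᵥ x j := by
    rw [sum_dot]
    exact Finset.sum_congr rfl fun i _ => by rw [dot_sum]
  rw [hexp]
  have hbound : ∀ i j : Fin N, x i ⬝ᵥ x j ≤ (x i ⬝ᵥ x i + x j ⬝ᵥ x j) / 2 := by
    intro i j
    have h0 : 0 ≤ (x i - x j) ⬝ᵥ (x i - x j) := dot_self_nonneg' _
    simp only [sub_dotProduct, dotProduct_sub] at h0
    have hc : x j ⬝ᵥ x i = x i ⬝ᵥ x j := dotProduct_comm _ _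
    linarith
  calc ∑ i, ∑ j, x i ⬝ᵥ x j
      ≤ ∑ i, ∑ j, (x i ⬝ᵥ x i + x j ⬝ᵥ x j) / 2 := by
        apply Finset.sum_le_sum; intro i _
        apply Finset.sum_le_sum; intro j _
        exact hbound i j
    _ = (N : ℝ) * ∑ i, x i ⬝ᵥ x i := by
        simp only [add_div, Finset.sum_add_distrib, Finset.sum_const,
          Finset.card_univ, Fintype.card_fin, nsmul_eq_mul, ← Finset.sum_div,
          ← Finset.mul_sum]
        ring

/-- Terminal monotonicity estimate: for symmetric matrices `cᵢ ⪰ γ I`, a positive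
semidefinite symmetric matrix `𝔠` with `‖𝔠 − cᵢ‖ ≤ a` (operator norm, expressed via the
quadratic form since all matrices are symmetric), and `δ ∈ [0,1)`,
`(δN/(1−δ))⟨m(c·x), m(x)⟩ + ∑ᵢ⟨cᵢxⁱ, xⁱ⟩ ≥ (γ − δa/(1−δ))∑ᵢ|xⁱ|²`. -/
theorem terminal_monotonicity {n N : ℕ} (hN : 0 < N) (γ a δ : ℝ)
    (hγ : 0 < γ) (ha : 0 ≤ a) (hδ : δ ∈ Set.Ico (0 : ℝ) 1)
    (c : Fin N → Matrix (Fin n) (Fin n) ℝ) (hcsymm : ∀ i, (c i).IsSymm)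
    (hclow : ∀ i, ∀ θ : Fin n → ℝ, γ * (θ ⬝ᵥ θ) ≤ θ ⬝ᵥ (c i).mulVec θ)
    (𝔠 : Matrix (Fin n) (Fin n) ℝ) (h𝔠symm : 𝔠.IsSymm) (h𝔠psd : 𝔠.PosSemidef)
    (hdist : ∀ i, ∀ θ : Fin n → ℝ, |θ ⬝ᵥ (𝔠 - c i).mulVec θ| ≤ a * (θ ⬝ᵥ θ))
    (x : Fin N → (Fin n → ℝ)) :
    (γ - δ * a / (1 - δ)) * ∑ i, (x i) ⬝ᵥ (x i)
      ≤ (δ * N / (1 - δ)) *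
          (((N : ℝ)⁻¹ • ∑ i, (c i).mulVec (x i)) ⬝ᵥ ((N : ℝ)⁻¹ • ∑ i, x i))
        + ∑ i, (c i).mulVec (x i) ⬝ᵥ x i := by
  obtain ⟨hδ0, hδ1⟩ := hδ
  have h1δ : (0:ℝ) < 1 - δ := by linarith
  have hNpos : (0:ℝ) < (N:ℝ) := by exact_mod_cast hN
  have hNne : (N:ℝ) ≠ 0 := ne_of_gt hNpos
  set T := ∑ i, x i ⬝ᵥ x i with hTdef
  set S := ∑ i, x i with hSdef
  set C := ∑ i, (c i).mulVec (x i) with hCdef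
  have hT0 : 0 ≤ T := Finset.sum_nonneg fun i _ => dot_self_nonneg' _
  have hCS : S ⬝ᵥ S ≤ (N:ℝ) * T := sum_dot_sum_le x
  have hMi : ∀ i, ((c i) - 𝔠).IsSymm := fun i => (hcsymm i).sub h𝔠symm
  have hbi : ∀ i, ∀ θ : Fin n → ℝ, |θ ⬝ᵥ ((c i) - 𝔠).mulVec θ| ≤ a * (θ ⬝ᵥ θ) := by
    intro i θ
    have heq : θ ⬝ᵥ ((c i) - 𝔠).mulVec θ = -(θ ⬝ᵥ (𝔠 - c i).mulVec θ) := by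
      rw [show (c i) - 𝔠 = -(𝔠 - c i) from (neg_sub _ _).symm, Matrix.neg_mulVec,
        dotProduct_neg]
    rw [heq, abs_neg]; exact hdist i θ
  have hsum : C ⬝ᵥ S = (𝔠.mulVec S ⬝ᵥ S) + ∑ i, (x i) ⬝ᵥ ((c i) - 𝔠).mulVec S := by
    have hmv : 𝔠.mulVec S = ∑ i, 𝔠.mulVec (x i) := mulVec_sum' 𝔠 x
    rw [hCdef, sum_dot, hmv, sum_dot, ← Finset.sum_add_distrib]
    apply Finset.sum_congr rfl
    intro i _
    rw [← symm_dot (hMi i) (x i) S, Matrix.sub_mulVec, sub_dotProduct]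
    ring
  have hpsd : 0 ≤ 𝔠.mulVec S ⬝ᵥ S := by
    rw [symm_dot h𝔠symm]
    simpa using h𝔠psd.dotProduct_mulVec_nonneg S
  have hterm : ∀ i, -(a/2) * ((N:ℝ) * (x i ⬝ᵥ x i) + (N:ℝ)⁻¹ * (S ⬝ᵥ S))
      ≤ (x i) ⬝ᵥ ((c i) - 𝔠).mulVec S := fun i => bilin_lb (hMi i) (hbi i) (x i) S hNpos
  have hCdotS : -(a * (N:ℝ) * T) ≤ C ⬝ᵥ S := by
    have hsumlb : ∑ i, (-(a/2) * ((N:ℝ) * (x i ⬝ᵥ x i) + (N:ℝ)⁻¹ * (S ⬝ᵥ S)))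
        ≤ ∑ i, (x i) ⬝ᵥ ((c i) - 𝔠).mulVec S :=
      Finset.sum_le_sum fun i _ => hterm i
    have hNinv : (N:ℝ) * ((N:ℝ)⁻¹ * (S ⬝ᵥ S)) = S ⬝ᵥ S := by
      field_simp
    have hlhs : ∑ i, (-(a/2) * ((N:ℝ) * (x i ⬝ᵥ x i) + (N:ℝ)⁻¹ * (S ⬝ᵥ S)))
        = -(a/2) * ((N:ℝ) * T + (S ⬝ᵥ S)) := by
      rw [← Finset.mul_sum, Finset.sum_add_distrib, ← Finset.mul_sum, ← hTdef,
        Finset.sum_const, Finset.card_univ, Fintype.card_fin, nsmul_eq_mul, hNinv]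
    rw [hsum]
    have h1 : -(a/2) * ((N:ℝ) * T + (S ⬝ᵥ S)) ≤ ∑ i, (x i) ⬝ᵥ ((c i) - 𝔠).mulVec S := by
      rw [← hlhs]; exact hsumlb
    nlinarith [hCS, hpsd, h1, ha]
  have hQ : γ * T ≤ ∑ i, (c i).mulVec (x i) ⬝ᵥ x i := by
    rw [hTdef, Finset.mul_sum]
    apply Finset.sum_le_sum
    intro i _
    rw [dotProduct_comm ((c i).mulVec (x i)) (x i)]
    exact hclow i (x i)
  have hgoal2 : (δ * N / (1 - δ)) * (((N:ℝ)⁻¹ • C) ⬝ᵥ ((N:ℝ)⁻¹ • S))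
      = (δ * N / (1 - δ) * ((N:ℝ)⁻¹ * (N:ℝ)⁻¹)) * (C ⬝ᵥ S) := by
    rw [smul_dotProduct, dotProduct_smul, smul_eq_mul, smul_eq_mul]
    ring
  rw [hgoal2]
  have hk : 0 ≤ δ * N / (1 - δ) * ((N:ℝ)⁻¹ * (N:ℝ)⁻¹) :=
    mul_nonneg (div_nonneg (by positivity) h1δ.le) (by positivity)
  have hmul := mul_le_mul_of_nonneg_left hCdotS hk
  have hco : (δ * N / (1 - δ) * ((N:ℝ)⁻¹ * (N:ℝ)⁻¹)) * (-(a * (N:ℝ) * T))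
      = -(δ * a / (1 - δ) * T) := by
    field_simp
  rw [hco] at hmul
  have hexpand : (γ - δ * a / (1 - δ)) * T = γ * T - δ * a / (1 - δ) * T := by ring
  linarith [hmul, hQ]
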